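/- arXiv:2102.06480 — 4 statements merged into one kernel-verified Lean document; each statement's English description precedes it below -/
import Mathlib

section
/- In a flow graph, for every path P = u_1,…,u_k the diverging and converging criteria for the excess flow agree: f(u_1,u_2) − Σ_{i=2}^{k−1} Σ_{v ≠ u_{i+1}} f(u_i,v) = f(u_{k−1},u_k) − Σ_{i=2}^{k−1} Σ_{v ≠ u_{i−1}} f(v,u_i), where the inner sums range over out-neighbours v of u_i (respectively in-neighbours v of u_i). -/
/-- A flow graph: a finite DAG with at most one edge between any ordered pair of
vertices, where each edge carries a positive flow value, `f` is zero on non-edges,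
and every vertex that is neither a source nor a sink satisfies flow conservation. -/
structure FlowGraph (V : Type) [Fintype V] [DecidableEq V] where
  E : V → V → Prop
  f : V → V → ℚ
  f_pos : ∀ u v, E u v → 0 < f u v
  f_eq_zero : ∀ u v, ¬ E u v → f u v = 0
  acyclic : ∀ v : V, ¬ Relation.TransGen E v v
  conservation : ∀ v : V, (∃ u, E u v) → (∃ w, E v w) →
    (∑ u, f u v) = (∑ w, f v w)

namespace FlowGraph

variable {V : Type} [Fintype V] [DecidableEq V] (G : FlowGraph V)

/-- Total flow entering `v`. -/
def fin (v : V) : ℚ := ∑ u, G.f u v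

/-- Total flow leaving `v`. -/
def fout (v : V) : ℚ := ∑ w, G.f v w

/-- A source has no incoming edges. -/
def IsSource (v : V) : Prop := ∀ u, ¬ G.E u v

/-- A sink has no outgoing edges. -/
def IsSink (v : V) : Prop := ∀ w, ¬ G.E v w

/-- A path: a sequence of at least two vertices joined by edges. -/
def IsPath (p : List V) : Prop := 2 ≤ p.length ∧ p.Chain' G.E

/-- A path from a source of `G` to a sink of `G`. -/
def IsSourceSinkPath (p : List V) : Prop :=
  G.IsPath p ∧ (∀ s ∈ p.head?, G.IsSource s) ∧ (∀ t ∈ p.getLast?, G.IsSink t)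

/-- Total weight of the decomposition entries whose path contains `p` as a
(contiguous) subpath. -/
def coverWeight (G : FlowGraph V) (p : List V) (D : List (List V × ℚ)) : ℚ :=
  (D.map (fun Pw => if p <:+: Pw.1 then Pw.2 else 0)).sum

/-- A flow decomposition: a finite list of source-to-sink paths with positive
weights such that on every edge the weights of the paths through it sum to the flow. -/
def IsFlowDecomposition (D : List (List V × ℚ)) : Prop :=
  (∀ Pw ∈ D, G.IsSourceSinkPath Pw.1 ∧ 0 < Pw.2) ∧
  (∀ u v : V, G.E u v → G.coverWeight [u, v] D = G.f u v)

/-- `p` is `w`-safe: in every flow decomposition the total weight of the paths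
containing `p` as a subpath is at least `w`. -/
def IsWSafe (p : List V) (w : ℚ) : Prop :=
  ∀ D, G.IsFlowDecomposition D → w ≤ G.coverWeight p D

/-- A safe path: a path that is `w`-safe for some `w > 0`. -/
def IsSafe (p : List V) : Prop := G.IsPath p ∧ ∃ w : ℚ, 0 < w ∧ G.IsWSafe p w

/-- The excess flow of a path `u₁ … u_k` (diverging criterion):
`f(u₁,u₂) − Σ_{i=2}^{k−1} Σ_{x ≠ u_{i+1}} f(u_i, x)`. -/
def excess : List V → ℚ
  | u :: v :: rest =>
      G.f u v - (((v :: rest).zip rest).map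
        (fun ab => ∑ x ∈ Finset.univ.erase ab.2, G.f ab.1 x)).sum
  | _ => 0

end FlowGraph

open FlowGraph in
/-- for every path `u 0, …, u (k-1)` in a flow graph, the diverging and
converging criteria for the excess flow agree. -/
theorem stmt_1 {V : Type} [Fintype V] [DecidableEq V] (G : FlowGraph V)
    (k : ℕ) (hk : 2 ≤ k) (u : ℕ → V) (hE : ∀ i < k - 1, G.E (u i) (u (i + 1))) :
    G.f (u 0) (u 1)
        - ∑ i ∈ Finset.Ico 1 (k - 1), ∑ x ∈ Finset.univ.erase (u (i + 1)), G.f (u i) x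
      = G.f (u (k - 2)) (u (k - 1))
        - ∑ i ∈ Finset.Ico 1 (k - 1), ∑ x ∈ Finset.univ.erase (u (i - 1)), G.f x (u i) := by
  
  obtain ⟨m, rfl⟩ : ∃ m, k = m + 2 := ⟨k - 2, by omega⟩
  simp only [show m + 2 - 1 = m + 1 from rfl, show m + 2 - 2 = m from rfl] at *
  have h1 : ∀ i ∈ Finset.Ico 1 (m + 1),
      (∑ x ∈ Finset.univ.erase (u (i + 1)), G.f (u i) x)
        = (∑ x, G.f (u i) x) - G.f (u i) (u (i + 1)) := fun i _ =>
    Finset.sum_erase_eq_sub (Finset.mem_univ _)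
  have h2 : ∀ i ∈ Finset.Ico 1 (m + 1),
      (∑ x ∈ Finset.univ.erase (u (i - 1)), G.f x (u i))
        = (∑ x, G.f (u i) x) - G.f (u (i - 1)) (u i) := by
    intro i hi
    simp only [Finset.mem_Ico] at hi
    rw [Finset.sum_erase_eq_sub (Finset.mem_univ _)]
    have hcons := G.conservation (u i)
      ⟨u (i - 1), by
        have := hE (i - 1) (by omega)
        rwa [Nat.sub_add_cancel hi.1] at this⟩
      ⟨u (i + 1), hE i (by omega)⟩
    rw [hcons]
  rw [Finset.sum_congr rfl h1, Finset.sum_congr rfl h2,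
    Finset.sum_sub_distrib, Finset.sum_sub_distrib]
  have key : G.f (u 0) (u 1) + ∑ i ∈ Finset.Ico 1 (m + 1), G.f (u i) (u (i + 1))
      = G.f (u m) (u (m + 1)) + ∑ i ∈ Finset.Ico 1 (m + 1), G.f (u (i - 1)) (u i) := by
    rw [Finset.sum_Ico_eq_sum_range, Finset.sum_Ico_eq_sum_range]
    simp only [Nat.add_sub_cancel, Nat.add_sub_cancel_left]
    have e1 : G.f (u 0) (u 1) + ∑ i ∈ Finset.range m, G.f (u (1 + i)) (u (1 + i + 1))
        = ∑ i ∈ Finset.range (m + 1), G.f (u i) (u (i + 1)) := by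
      rw [Finset.sum_range_succ', add_comm]
      congr 1
      exact Finset.sum_congr rfl fun i _ => by congr 2 <;> omega
    have e2 : G.f (u m) (u (m + 1)) + ∑ i ∈ Finset.range m, G.f (u i) (u (1 + i))
        = ∑ i ∈ Finset.range (m + 1), G.f (u i) (u (i + 1)) := by
      rw [Finset.sum_range_succ, add_comm]
      congr 1
      exact Finset.sum_congr rfl fun i _ => by congr 2; omega
    rw [e1, ← e2]
  linarith
end

section
/- In a flow graph, a path P is w-safe with w > 0 if and only if its excess flow satisfies f_P ≥ w > 0. -/
open List Finset Relation

section ListHelpers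
set_option linter.unusedSectionVars false
variable {V : Type} [DecidableEq V] {R : V → V → Prop}


lemma occ_unique : ∀ (s₁ : List V) {l t₁ s₂ t₂ : List V} {c : V}, l.Nodup →
    l = s₁ ++ c :: t₁ → l = s₂ ++ c :: t₂ → s₁ = s₂ ∧ t₁ = t₂ := by
  intro s₁
  induction s₁ with
  | nil =>
    intro l t₁ s₂ t₂ c hn h1 h2
    subst h1
    cases s₂ with
    | nil =>
      simp only [nil_append] at h2
      exact ⟨rfl, (List.cons.inj h2).2⟩
    | cons e s₂' =>
      simp only [nil_append, cons_append] at h2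
      obtain ⟨rfl, h2'⟩ := List.cons.inj h2
      exfalso
      have hc : c ∈ t₁ := by rw [h2']; simp
      simp only [nil_append, nodup_cons] at hn
      exact hn.1 hc
  | cons e s₁' ih =>
    intro l t₁ s₂ t₂ c hn h1 h2
    subst h1
    cases s₂ with
    | nil =>
      simp only [nil_append] at h2
      obtain ⟨rfl, h2'⟩ := List.cons.inj h2
      exfalso
      have hc : e ∈ t₂ := by rw [← h2']; simp
      rw [← h2'] at hc
      simp only [cons_append, nodup_cons] at hn
      exact hn.1 (by simpa using hc)
    | cons e' s₂' =>
      simp only [cons_append] at h2 hn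
      obtain ⟨rfl, h2'⟩ := List.cons.inj h2
      have h3 := ih (l := s₁' ++ c :: t₁) (List.nodup_cons.mp (by simpa using hn)).2 rfl h2'
      exact ⟨by rw [h3.1], h3.2⟩


lemma eq_dropLast_append {q : List V} {y : V} (hy : q.getLast? = some y) :
    q.dropLast ++ [y] = q := by
  have hq : q ≠ [] := by rintro rfl; simp at hy
  have hy' : q.getLast hq = y := by
    rw [List.getLast?_eq_getLast hq] at hy; exact Option.some_inj.mp hy
  rw [← hy']; exact List.dropLast_append_getLast hq

lemma pair_infix_succ_unique {l : List V} (hn : l.Nodup) {q : List V} {y x x' : V}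
    (hy : q.getLast? = some y)
    (h1 : q ++ [x] <:+: l) (h2 : q ++ [x'] <:+: l) : x = x' := by
  have hq : q ≠ [] := by rintro rfl; simp at hy
  have hy' : q.getLast hq = y := by
    rw [List.getLast?_eq_getLast hq] at hy; exact Option.some_inj.mp hy
  have hq' : q.dropLast ++ [y] = q := by
    rw [← hy']; exact List.dropLast_append_getLast hq
  obtain ⟨s1, t1, e1⟩ := h1
  obtain ⟨s2, t2, e2⟩ := h2
  have h3 := occ_unique (s1 ++ q.dropLast) (c := y) (t₁ := x :: t1) hn
    (by rw [← e1, ← hq']; simp [append_assoc]) (s₂ := s2 ++ q.dropLast) (t₂ := x' :: t2)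
    (by rw [← e2, ← hq']; simp [append_assoc])
  exact (List.cons.inj h3.2).1

lemma pair_infix_pred_unique {l : List V} (hn : l.Nodup) {y u u' : V}
    (h1 : [u, y] <:+: l) (h2 : [u', y] <:+: l) : u = u' := by
  obtain ⟨s1, t1, e1⟩ := h1
  obtain ⟨s2, t2, e2⟩ := h2
  have h3 := occ_unique (s1 ++ [u]) (c := y) (t₁ := t1) hn
    (by rw [← e1]; simp) (s₂ := s2 ++ [u']) (t₂ := t2) (by rw [← e2]; simp)
  have h4 := h3.1
  have : (s1 ++ [u]).getLast? = (s2 ++ [u']).getLast? := by rw [h4]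
  simpa using this


lemma infix_cons_right {l : List V} {q : List V} {c : V} (h : q <:+: l) : q <:+: c :: l := by
  obtain ⟨s, t, rfl⟩ := h
  exact ⟨c :: s, t, rfl⟩

lemma pair_infix_of_mem_zip : ∀ {l : List V} {a b : V}, (a, b) ∈ l.zip l.tail → [a, b] <:+: l := by
  intro l
  induction l with
  | nil => intro a b h; simp at h
  | cons c t ih =>
    intro a b h
    cases t with
    | nil => simp at h
    | cons d t' =>
      simp only [tail_cons, zip_cons_cons, List.mem_cons] at h
      rcases h with h | h
      · rw [Prod.mk.injEq] at h
        obtain ⟨rfl, rfl⟩ := h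
        exact ⟨[], t', rfl⟩
      · exact infix_cons_right (ih (by simpa using h))

lemma mem_zip_of_pair_infix : ∀ {l : List V} {a b : V}, [a, b] <:+: l → (a, b) ∈ l.zip l.tail := by
  intro l
  induction l with
  | nil => intro a b h; exact absurd (List.eq_nil_of_infix_nil h) (by simp)
  | cons c t ih =>
    intro a b h
    rcases (List.infix_cons_iff.mp h) with h | h
    · obtain ⟨t', ht⟩ := h
      cases t with
      | nil => simp at ht
      | cons d t'' =>
        have : a = c ∧ b = d := by
          have := ht
          simp only [cons_append] at this
          exact ⟨(List.cons.inj this.symm).1.symm, (List.cons.inj (List.cons.inj this.symm).2).1.symm⟩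
        obtain ⟨rfl, rfl⟩ := this
        simp
    · have := ih h
      cases t with
      | nil => simp at this
      | cons d t'' => simp only [tail_cons, zip_cons_cons, List.mem_cons]; right; simpa using this

lemma rel_of_pair_infix {l : List V} (hc : l.Chain' R) {a b : V} (h : [a, b] <:+: l) : R a b := by
  have h2 : Chain' R [a, b] := hc.infix h
  exact (List.isChain_cons_cons.mp h2).1

lemma chain'_of_pair_infix : ∀ {l : List V}, (∀ a b, [a, b] <:+: l → R a b) → l.Chain' R := by
  intro l
  induction l with
  | nil => intro _; exact List.isChain_nil
  | cons c t ih =>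
    intro h
    cases t with
    | nil => exact List.isChain_singleton _
    | cons d t' =>
      simp only [List.Chain']; rw [List.isChain_cons_cons]
      exact ⟨h c d ⟨[], t', rfl⟩, ih fun a b hab => h a b (infix_cons_right hab)⟩

lemma nodup_of_chain' {l : List V} (hacy : ∀ v, ¬ Relation.TransGen R v v)
    (hc : l.Chain' R) : l.Nodup := by
  haveI : IsTrans V (Relation.TransGen R) := ⟨fun _ _ _ => Relation.TransGen.trans⟩
  have h1 : l.Chain' (Relation.TransGen R) := hc.imp fun {a b} h => Relation.TransGen.single h
  have h2 : l.Pairwise (Relation.TransGen R) := List.isChain_iff_pairwise.mp h1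
  exact h2.imp fun {a b} h => by rintro rfl; exact hacy a h


lemma consec_pair_infix' : ∀ {l : List V} {m : ℕ} {c d : V},
    l[m]? = some c → l[m + 1]? = some d → [c, d] <:+: l := by
  intro l
  induction l with
  | nil => intro m c d hc _; simp at hc
  | cons e t ih =>
    intro m c d hc hd
    cases m with
    | zero =>
      simp only [List.getElem?_cons_zero, Option.some_inj] at hc
      subst hc
      rw [List.getElem?_cons_succ] at hd
      cases t with
      | nil => simp at hd
      | cons f t' =>
        simp only [List.getElem?_cons_zero, Option.some_inj] at hd
        subst hd
        exact ⟨[], t', rfl⟩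
    | succ m' =>
      rw [List.getElem?_cons_succ] at hc hd
      exact infix_cons_right (ih hc hd)

lemma consec_pair_infix : ∀ (l : List V) (m : ℕ) (h : m + 1 < l.length),
    [l.get ⟨m, by omega⟩, l.get ⟨m + 1, h⟩] <:+: l := by
  intro l
  induction l with
  | nil => intro m h; simp at h
  | cons c t ih =>
    intro m h
    cases m with
    | zero =>
      cases t with
      | nil => simp at h
      | cons d t' => exact ⟨[], t', rfl⟩
    | succ m' =>
      have := ih m' (by simpa using h)
      exact infix_cons_right this

end ListHelpers

namespace FlowGraph
open scoped Classical
variable {V : Type} [Fintype V] [DecidableEq V] (G : FlowGraph V)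

def posr (g : V → V → ℚ) : V → V → Prop := fun u v => 0 < g u v

def Resid (g : V → V → ℚ) : Prop :=
  (∀ u v, 0 ≤ g u v) ∧ (∀ u v, 0 < g u v → G.E u v) ∧
  (∀ v : V, (∃ u, G.E u v) → (∃ w, G.E v w) → (∑ u, g u v) = (∑ w, g v w))

lemma resid_self : G.Resid G.f :=
  ⟨fun u v => by
    by_cases h : G.E u v
    · exact le_of_lt (G.f_pos u v h)
    · rw [G.f_eq_zero u v h],
  fun u v h => by
    by_contra he
    rw [G.f_eq_zero u v he] at h
    exact lt_irrefl 0 h,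
  G.conservation⟩

def supp (g : V → V → ℚ) : Finset (V × V) :=
  Finset.univ.filter fun e => 0 < g e.1 e.2

lemma nodup_of_chainE {l : List V} (hc : l.Chain' G.E) : l.Nodup :=
  nodup_of_chain' G.acyclic hc

lemma exists_pred {g : V → V → ℚ} (hg : G.Resid g) {c : V} (hs : ¬ G.IsSource c)
    (hc : ∃ d, 0 < g c d) : ∃ u, 0 < g u c := by
  obtain ⟨d, hd⟩ := hc
  have hin : ∃ u, G.E u c := by
    rw [IsSource] at hs; push_neg at hs; exact hs
  have hout : ∃ w, G.E c w := ⟨d, hg.2.1 _ _ hd⟩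
  have hcons := hg.2.2 c hin hout
  have h1 : 0 < ∑ w, g c w :=
    lt_of_lt_of_le hd (Finset.single_le_sum (fun w _ => hg.1 c w) (Finset.mem_univ d))
  by_contra hno
  push_neg at hno
  have h2 : ∑ u, g u c ≤ 0 := Finset.sum_nonpos fun u _ => hno u
  rw [hcons] at h2; linarith

lemma exists_succ {g : V → V → ℚ} (hg : G.Resid g) {c : V} (hs : ¬ G.IsSink c)
    (hc : ∃ u, 0 < g u c) : ∃ w, 0 < g c w := by
  obtain ⟨d, hd⟩ := hc
  have hout : ∃ w, G.E c w := by
    rw [IsSink] at hs; push_neg at hs; exact hs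
  have hin : ∃ u, G.E u c := ⟨d, hg.2.1 _ _ hd⟩
  have hcons := hg.2.2 c hin hout
  have h1 : 0 < ∑ u, g u c :=
    lt_of_lt_of_le hd (Finset.single_le_sum (fun w _ => hg.1 w c) (Finset.mem_univ d))
  by_contra hno
  push_neg at hno
  have h2 : ∑ w, g c w ≤ 0 := Finset.sum_nonpos fun w _ => hno w
  rw [← hcons] at h2; linarith

lemma toSource {g : V → V → ℚ} (hg : G.Resid g) :
    ∀ (n : ℕ) (c : V), (Finset.univ.filter fun w => Relation.TransGen G.E w c).card ≤ n →
    (∃ d, 0 < g c d) →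
    ∃ B : List V, B.Chain' (posr g) ∧ B.getLast? = some c ∧ ∀ h ∈ B.head?, G.IsSource h := by
  intro n
  induction n with
  | zero =>
    intro c hcard hc
    by_cases hs : G.IsSource c
    · exact ⟨[c], List.isChain_singleton _, by simp, by simpa using hs⟩
    · exfalso
      obtain ⟨u, hu⟩ := G.exists_pred hg hs hc
      have ht : Relation.TransGen G.E u c := Relation.TransGen.single (hg.2.1 _ _ hu)
      have hmem : u ∈ Finset.univ.filter fun w => Relation.TransGen G.E w c := by
        simp [ht]
      have := Finset.card_pos.mpr ⟨u, hmem⟩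
      omega
  | succ n ih =>
    intro c hcard hc
    by_cases hs : G.IsSource c
    · exact ⟨[c], List.isChain_singleton _, by simp, by simpa using hs⟩
    · obtain ⟨u, hu⟩ := G.exists_pred hg hs hc
      have hEuc : G.E u c := hg.2.1 _ _ hu
      have hsub : (Finset.univ.filter fun w => Relation.TransGen G.E w u) ⊂
          (Finset.univ.filter fun w => Relation.TransGen G.E w c) := by
        constructor
        · intro w hw
          simp only [Finset.mem_filter, Finset.mem_univ, true_and] at hw ⊢
          exact hw.tail hEuc
        · intro hcon
          have : u ∈ Finset.univ.filter fun w => Relation.TransGen G.E w c := by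
            simp [Relation.TransGen.single hEuc]
          have := hcon this
          simp only [Finset.mem_filter, Finset.mem_univ, true_and] at this
          exact G.acyclic u this
      have hlt := Finset.card_lt_card hsub
      obtain ⟨B, hB1, hB2, hB3⟩ := ih u (by omega) ⟨c, hu⟩
      have hBne : B ≠ [] := by rintro rfl; simp at hB2
      refine ⟨B ++ [c], ?_, by simp, ?_⟩
      · simp only [List.Chain']; rw [List.isChain_append]
        refine ⟨hB1, List.isChain_singleton _, ?_⟩
        intro x hx y hy
        simp only [List.head?_cons, Option.mem_some_iff] at hy
        rw [hB2] at hx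
        simp only [Option.mem_some_iff] at hx
        subst hx; subst hy
        exact hu
      · intro h hh
        rw [List.head?_append_of_ne_nil _ hBne] at hh
        exact hB3 h hh

lemma toSink {g : V → V → ℚ} (hg : G.Resid g) :
    ∀ (n : ℕ) (c : V), (Finset.univ.filter fun w => Relation.TransGen G.E c w).card ≤ n →
    (∃ u, 0 < g u c) →
    ∃ F : List V, F.Chain' (posr g) ∧ F.head? = some c ∧ ∀ t ∈ F.getLast?, G.IsSink t := by
  intro n
  induction n with
  | zero =>
    intro c hcard hc
    by_cases hs : G.IsSink c
    · exact ⟨[c], List.isChain_singleton _, by simp, by simpa using hs⟩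
    · exfalso
      obtain ⟨w, hw⟩ := G.exists_succ hg hs hc
      have ht : Relation.TransGen G.E c w := Relation.TransGen.single (hg.2.1 _ _ hw)
      have hmem : w ∈ Finset.univ.filter fun x => Relation.TransGen G.E c x := by
        simp [ht]
      have := Finset.card_pos.mpr ⟨w, hmem⟩
      omega
  | succ n ih =>
    intro c hcard hc
    by_cases hs : G.IsSink c
    · exact ⟨[c], List.isChain_singleton _, by simp, by simpa using hs⟩
    · obtain ⟨w, hw⟩ := G.exists_succ hg hs hc
      have hEcw : G.E c w := hg.2.1 _ _ hw
      have hsub : (Finset.univ.filter fun x => Relation.TransGen G.E w x) ⊂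
          (Finset.univ.filter fun x => Relation.TransGen G.E c x) := by
        constructor
        · intro x hx
          simp only [Finset.mem_filter, Finset.mem_univ, true_and] at hx ⊢
          exact Relation.TransGen.head hEcw hx
        · intro hcon
          have : w ∈ Finset.univ.filter fun x => Relation.TransGen G.E c x := by
            simp [Relation.TransGen.single hEcw]
          have := hcon this
          simp only [Finset.mem_filter, Finset.mem_univ, true_and] at this
          exact G.acyclic w this
      have hlt := Finset.card_lt_card hsub
      obtain ⟨F, hF1, hF2, hF3⟩ := ih w (by omega) ⟨c, hw⟩
      have hFne : F ≠ [] := by rintro rfl; simp at hF2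
      refine ⟨c :: F, ?_, by simp, ?_⟩
      · simp only [List.Chain']; rw [List.isChain_cons]
        refine ⟨?_, hF1⟩
        intro y hy
        rw [hF2] at hy
        simp only [Option.mem_some_iff] at hy
        subst hy; exact hw
      · intro t ht
        cases F with
        | nil => exact absurd rfl hFne
        | cons f0 F' =>
          rw [List.getLast?_cons_cons] at ht
          exact hF3 t ht
lemma cw_cons (p : List V) (P : List V) (w : ℚ) (D : List (List V × ℚ)) :
    G.coverWeight p ((P, w) :: D) = (if p <:+: P then w else 0) + G.coverWeight p D := by
  simp [coverWeight]

lemma cw_nil (p : List V) : G.coverWeight p [] = 0 := rfl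

lemma cw_nonneg (p : List V) {D : List (List V × ℚ)} (hD : ∀ Pw ∈ D, 0 ≤ Pw.2) :
    0 ≤ G.coverWeight p D := by
  induction D with
  | nil => simp [cw_nil]
  | cons e D' ih =>
    rcases e with ⟨P, w⟩
    rw [cw_cons]
    have h1 : 0 ≤ w := hD (P, w) (by simp)
    have h2 := ih fun Pw h => hD Pw (by simp [h])
    have : 0 ≤ (if p <:+: P then w else 0) := by split <;> simp [h1]
    linarith

lemma cw_mono {p q : List V} (h : p <:+: q) {D : List (List V × ℚ)}
    (hD : ∀ Pw ∈ D, 0 ≤ Pw.2) : G.coverWeight q D ≤ G.coverWeight p D := by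
  induction D with
  | nil => simp [cw_nil]
  | cons e D' ih =>
    rcases e with ⟨P, w⟩
    rw [cw_cons, cw_cons]
    have h1 : 0 ≤ w := hD (P, w) (by simp)
    have h2 := ih fun Pw hh => hD Pw (by simp [hh])
    have h3 : (if q <:+: P then w else 0) ≤ (if p <:+: P then w else 0) := by
      by_cases hq : q <:+: P
      · rw [if_pos hq, if_pos (h.trans hq)]
      · rw [if_neg hq]; split <;> simp [h1]
    linarith

lemma extract {g : V → V → ℚ} (hg : G.Resid g) {P : List V} (hch : P.Chain' (posr g))
    (hlen : 2 ≤ P.length) (hsrc : ∀ s ∈ P.head?, G.IsSource s)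
    (hsnk : ∀ t ∈ P.getLast?, G.IsSink t) :
    ∃ (w0 : ℚ) (g' : V → V → ℚ), 0 < w0 ∧ G.Resid g' ∧
      (supp g').card < (supp g).card ∧
      (∀ u v, g u v = (if [u, v] <:+: P then w0 else 0) + g' u v) ∧
      G.IsSourceSinkPath P := by
  have hchE : P.Chain' G.E := hch.imp fun a b h => hg.2.1 a b h
  have hnd : P.Nodup := G.nodup_of_chainE hchE
  have hPne : P ≠ [] := by rintro rfl; simp at hlen
  set zp := P.zip P.tail with hzp_def
  have hzp : zp ≠ [] := by
    have : zp.length = min P.length P.tail.length := List.length_zip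
    have h2 : P.tail.length = P.length - 1 := List.length_tail
    intro hcon
    rw [hcon] at this
    simp only [List.length_nil] at this
    omega
  set T := (zp.map fun e => g e.1 e.2).toFinset with hT_def
  have hTne : T.Nonempty := by
    obtain ⟨e, he⟩ := List.exists_mem_of_ne_nil zp hzp
    exact ⟨g e.1 e.2, List.mem_toFinset.mpr (List.mem_map.mpr ⟨e, he, rfl⟩)⟩
  set w0 := T.min' hTne with hw0_def
  have hmin_le : ∀ a b, [a, b] <:+: P → w0 ≤ g a b := by
    intro a b h
    exact Finset.min'_le _ _ (List.mem_toFinset.mpr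
      (List.mem_map.mpr ⟨(a, b), mem_zip_of_pair_infix h, rfl⟩))
  obtain ⟨⟨a0, b0⟩, ha0, ha0eq⟩ : ∃ e ∈ zp, g e.1 e.2 = w0 := by
    have hmm := T.min'_mem hTne
    obtain ⟨e, he, heq⟩ := List.mem_map.mp (List.mem_toFinset.mp hmm)
    exact ⟨e, he, heq⟩
  have ha0inf : [a0, b0] <:+: P := pair_infix_of_mem_zip ha0
  have hw0pos : 0 < w0 := by
    rw [← ha0eq]
    exact rel_of_pair_infix hch ha0inf
  set g' : V → V → ℚ := fun u v => g u v - if [u, v] <:+: P then w0 else 0 with hg'_def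
  have hg'le : ∀ u v, g' u v ≤ g u v := by
    intro u v
    simp only [hg'_def]
    split
    · linarith
    · linarith
  have hresid : G.Resid g' := by
    refine ⟨?_, ?_, ?_⟩
    · intro u v
      simp only [hg'_def]
      by_cases hi : [u, v] <:+: P
      · rw [if_pos hi]; linarith [hmin_le u v hi]
      · rw [if_neg hi]; linarith [hg.1 u v]
    · intro u v h
      exact hg.2.1 u v (lt_of_lt_of_le h (hg'le u v))
    · intro v hin hout
      have hsums : (∑ u, if [u, v] <:+: P then w0 else 0)
          = (∑ w, if [v, w] <:+: P then w0 else 0) := by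
        by_cases hv : v ∈ P
        · obtain ⟨s, t, hst⟩ := List.append_of_mem hv
          have ht : t ≠ [] := by
            rintro rfl
            have : P.getLast? = some v := by rw [hst]; simp
            obtain ⟨w1, hw1⟩ := hout
            exact hsnk v this w1 hw1
          have hs : s ≠ [] := by
            rintro rfl
            have : P.head? = some v := by rw [hst]; simp
            obtain ⟨u1, hu1⟩ := hin
            exact hsrc v this u1 hu1
          obtain ⟨w1, t', rfl⟩ : ∃ w1 t', t = w1 :: t' := by
            cases t with
            | nil => exact absurd rfl ht
            | cons w1 t' => exact ⟨w1, t', rfl⟩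
          obtain ⟨s0, u0, rfl⟩ : ∃ s0 u0, s = s0 ++ [u0] := by
            rcases List.eq_nil_or_concat s with h | ⟨s0, u0, h⟩
            · exact absurd h hs
            · exact ⟨s0, u0, by rw [h, List.concat_eq_append]⟩
          have h1 : [u0, v] <:+: P := ⟨s0, w1 :: t', by rw [hst]; simp⟩
          have h2 : [v, w1] <:+: P := ⟨s0 ++ [u0], t', by rw [hst]; simp⟩
          have hL : (∑ u, if [u, v] <:+: P then w0 else 0) = w0 := by
            rw [Finset.sum_eq_single u0]
            · rw [if_pos h1]
            · intro u' _ hne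
              rw [if_neg]
              intro hcon
              exact hne (pair_infix_pred_unique hnd hcon h1)
            · intro h; exact absurd (Finset.mem_univ u0) h
          have hR : (∑ w, if [v, w] <:+: P then w0 else 0) = w0 := by
            rw [Finset.sum_eq_single w1]
            · rw [if_pos h2]
            · intro w' _ hne
              rw [if_neg]
              intro hcon
              exact hne (pair_infix_succ_unique hnd (q := [v]) (y := v) (by simp) hcon h2)
            · intro h; exact absurd (Finset.mem_univ w1) h
          rw [hL, hR]
        · rw [Finset.sum_eq_zero, Finset.sum_eq_zero]
          · intro w _
            rw [if_neg]
            intro hcon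
            exact hv (hcon.subset (by simp))
          · intro u _
            rw [if_neg]
            intro hcon
            exact hv (hcon.subset (by simp))
      simp only [hg'_def]
      rw [Finset.sum_sub_distrib, Finset.sum_sub_distrib, hg.2.2 v hin hout, hsums]
  have hcard : (supp g').card < (supp g).card := by
    apply Finset.card_lt_card
    constructor
    · intro e he
      simp only [supp, Finset.mem_filter, Finset.mem_univ, true_and] at he ⊢
      exact lt_of_lt_of_le he (hg'le e.1 e.2)
    · intro hcon
      have h1 : (a0, b0) ∈ supp g := by
        simp only [supp, Finset.mem_filter, Finset.mem_univ, true_and]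
        rw [ha0eq]; exact hw0pos
      have h2 := hcon h1
      simp only [supp, Finset.mem_filter, Finset.mem_univ, true_and, hg'_def] at h2
      rw [if_pos ha0inf, ha0eq] at h2
      linarith
  refine ⟨w0, g', hw0pos, hresid, hcard, ?_, ⟨⟨hlen, hchE⟩, hsrc, hsnk⟩⟩
  intro u v
  simp only [hg'_def]
  ring

lemma zero_decomp {g : V → V → ℚ} (hg : G.Resid g) (hall : ∀ u v, g u v ≤ 0) :
    ∃ D : List (List V × ℚ), (∀ Pw ∈ D, G.IsSourceSinkPath Pw.1 ∧ 0 < Pw.2) ∧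
      ∀ u v, G.coverWeight [u, v] D = g u v := by
  refine ⟨[], by simp, ?_⟩
  intro u v
  rw [cw_nil]
  exact (le_antisymm (hall u v) (hg.1 u v)).symm

lemma exists_decomp_aux : ∀ (n : ℕ) (g : V → V → ℚ), (supp g).card ≤ n → G.Resid g →
    ∃ D : List (List V × ℚ), (∀ Pw ∈ D, G.IsSourceSinkPath Pw.1 ∧ 0 < Pw.2) ∧
      ∀ u v, G.coverWeight [u, v] D = g u v := by
  intro n
  induction n with
  | zero =>
    intro g hcard hg
    refine G.zero_decomp hg ?_
    intro u v
    by_contra hpos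
    push_neg at hpos
    have : (u, v) ∈ supp g := by
      simp only [supp, Finset.mem_filter, Finset.mem_univ, true_and]
      exact hpos
    have := Finset.card_pos.mpr ⟨(u, v), this⟩
    omega
  | succ n ih =>
    intro g hcard hg
    by_cases hall : ∀ u v, g u v ≤ 0
    · exact G.zero_decomp hg hall
    · push_neg at hall
      obtain ⟨u, v, huv⟩ := hall
      obtain ⟨B, hB1, hB2, hB3⟩ := G.toSource hg
        (Finset.univ.filter fun w => Relation.TransGen G.E w u).card u le_rfl ⟨v, huv⟩
      obtain ⟨F, hF1, hF2, hF3⟩ := G.toSink hg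
        (Finset.univ.filter fun w => Relation.TransGen G.E v w).card v le_rfl ⟨u, huv⟩
      have hBne : B ≠ [] := by rintro rfl; simp at hB2
      have hFne : F ≠ [] := by rintro rfl; simp at hF2
      set P := B ++ F with hP_def
      have hch : P.Chain' (posr g) := by
        rw [hP_def]; simp only [List.Chain']; rw [List.isChain_append]
        refine ⟨hB1, hF1, ?_⟩
        intro x hx y hy
        rw [hB2] at hx
        rw [hF2] at hy
        simp only [Option.mem_some_iff] at hx hy
        subst hx; subst hy
        exact huv
      have hlen : 2 ≤ P.length := by
        rw [hP_def, List.length_append]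
        have := List.length_pos_iff.mpr hBne
        have := List.length_pos_iff.mpr hFne
        omega
      have hsrc : ∀ s ∈ P.head?, G.IsSource s := by
        rw [hP_def, List.head?_append_of_ne_nil _ hBne]
        exact hB3
      have hsnk : ∀ t ∈ P.getLast?, G.IsSink t := by
        rw [hP_def, List.getLast?_append_of_ne_nil _ hFne]
        exact hF3
      obtain ⟨w0, g', hw0, hres, hcd, heq, hssp⟩ := G.extract hg hch hlen hsrc hsnk
      obtain ⟨D', hD1', hD2'⟩ := ih g' (by omega) hres
      refine ⟨(P, w0) :: D', ?_, ?_⟩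
      · intro Pw hPw
        rcases List.mem_cons.mp hPw with h | h
        · rw [h]; exact ⟨hssp, hw0⟩
        · exact hD1' Pw h
      · intro a b
        rw [cw_cons, hD2' a b]
        exact (heq a b).symm

lemma exists_decomp {g : V → V → ℚ} (hg : G.Resid g) :
    ∃ D : List (List V × ℚ), (∀ Pw ∈ D, G.IsSourceSinkPath Pw.1 ∧ 0 < Pw.2) ∧
      ∀ u v, G.coverWeight [u, v] D = g u v :=
  G.exists_decomp_aux (supp g).card g le_rfl hg

def excessOf (g : V → V → ℚ) : List V → ℚ
  | u :: v :: rest =>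
      g u v - (((v :: rest).zip rest).map
        (fun ab => ∑ x ∈ Finset.univ.erase ab.2, g ab.1 x)).sum
  | _ => 0

lemma excessOf_f (p : List V) : excessOf G.f p = G.excess p := by
  match p with
  | [] => rfl
  | [_] => rfl
  | _ :: _ :: _ => rfl

def capg (g : V → V → ℚ) (q : List V) (d : V) (m : ℕ) : ℚ :=
  ∑ x ∈ Finset.univ.erase (q.getD (m + 1) d), g (q.getD m d) x

lemma zipsum (g : V → V → ℚ) : ∀ (l : List V) (b d : V),
    (((b :: l).zip l).map (fun ab => ∑ x ∈ Finset.univ.erase ab.2, g ab.1 x)).sum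
      = ∑ m ∈ Finset.range l.length, capg g (b :: l) d m := by
  intro l
  induction l with
  | nil => intro b d; simp
  | cons c t ih =>
    intro b d
    have h0 : capg g (b :: c :: t) d 0 = ∑ x ∈ Finset.univ.erase c, g b x := by
      simp [capg]
    have hs : ∀ m, capg g (b :: c :: t) d (m + 1) = capg g (c :: t) d m := by
      intro m; simp [capg]
    rw [List.length_cons, Finset.sum_range_succ']
    simp only [hs, h0]
    rw [List.zip_cons_cons, List.map_cons, List.sum_cons, ← ih c d]
    ring

lemma excessOf_eq (g : V → V → ℚ) (a b : V) (l : List V) (d : V) :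
    excessOf g (a :: b :: l) = g a b - ∑ m ∈ Finset.range l.length, capg g (b :: l) d m := by
  rw [show excessOf g (a :: b :: l) = g a b - (((b :: l).zip l).map
        (fun ab => ∑ x ∈ Finset.univ.erase ab.2, g ab.1 x)).sum from rfl, zipsum g l b d]

lemma cw_eq_zero {p : List V} {D : List (List V × ℚ)} (h : ∀ Pw ∈ D, ¬ p <:+: Pw.1) :
    G.coverWeight p D = 0 := by
  induction D with
  | nil => exact G.cw_nil p
  | cons e D' ih =>
    rcases e with ⟨P, w⟩
    rw [cw_cons, if_neg (h (P, w) (by simp)), ih fun Pw hh => h Pw (by simp [hh])]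
    ring

lemma cw_pair {D : List (List V × ℚ)} (hD : G.IsFlowDecomposition D) (y x : V) :
    G.coverWeight [y, x] D = G.f y x := by
  by_cases h : G.E y x
  · exact hD.2 y x h
  · rw [G.f_eq_zero y x h]
    exact G.cw_eq_zero fun Pw hPw hcon => h (rel_of_pair_infix (hD.1 Pw hPw).1.1.2 hcon)

lemma cw_split {D : List (List V × ℚ)} (hD : ∀ Pw ∈ D, G.IsSourceSinkPath Pw.1)
    {q : List V} {y : V} (hy : q.getLast? = some y) (hns : ¬ G.IsSink y) :
    G.coverWeight q D = ∑ x : V, G.coverWeight (q ++ [x]) D := by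
  have hqne : q ≠ [] := by rintro rfl; simp at hy
  induction D with
  | nil => simp [cw_nil]
  | cons e D' ih =>
    rcases e with ⟨P, w⟩
    have hssp := hD (P, w) (by simp)
    have hPnd : P.Nodup := G.nodup_of_chainE hssp.1.2
    have hterm : (if q <:+: P then w else 0)
        = ∑ x : V, (if q ++ [x] <:+: P then w else 0) := by
      by_cases hq : q <:+: P
      · obtain ⟨s, t, hst⟩ := hq
        have ht : t ≠ [] := by
          rintro rfl
          have hPL : P.getLast? = some y := by
            rw [← hst, List.append_nil, List.getLast?_append_of_ne_nil s hqne, hy]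
          exact hns (hssp.2.2 y hPL)
        obtain ⟨x0, t', rfl⟩ : ∃ x0 t', t = x0 :: t' := by
          cases t with
          | nil => exact absurd rfl ht
          | cons x0 t' => exact ⟨x0, t', rfl⟩
        have h0 : q ++ [x0] <:+: P := ⟨s, t', by rw [← hst]; simp⟩
        rw [if_pos ⟨s, x0 :: t', hst⟩]
        rw [Finset.sum_eq_single x0]
        · rw [if_pos h0]
        · intro x' _ hne
          rw [if_neg]
          intro hcon
          exact hne (pair_infix_succ_unique hPnd hy hcon h0)
        · intro h; exact absurd (Finset.mem_univ x0) h
      · rw [if_neg hq, eq_comm]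
        apply Finset.sum_eq_zero
        intro x _
        rw [if_neg]
        intro hcon
        exact hq ((List.prefix_append q [x]).isInfix.trans hcon)
    rw [cw_cons, hterm, ih fun Pw hh => hD Pw (by simp [hh]), ← Finset.sum_add_distrib]
    exact Finset.sum_congr rfl fun x _ => (G.cw_cons _ P w D').symm

lemma cw_step {D : List (List V × ℚ)} (hD : G.IsFlowDecomposition D) {q : List V} {y : V}
    (hy : q.getLast? = some y) {z : V} (hz : G.E y z) :
    G.coverWeight q D - (∑ x ∈ Finset.univ.erase z, G.f y x)
      ≤ G.coverWeight (q ++ [z]) D := by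
  have hns : ¬ G.IsSink y := fun h => h z hz
  have hnn : ∀ Pw ∈ D, 0 ≤ Pw.2 := fun Pw h => le_of_lt (hD.1 Pw h).2
  rw [G.cw_split (fun Pw h => (hD.1 Pw h).1) hy hns,
    ← Finset.add_sum_erase _ _ (Finset.mem_univ z)]
  have hqne : q ≠ [] := by rintro rfl; simp at hy
  have hq' : q.dropLast ++ [y] = q := eq_dropLast_append hy
  have hbound : ∀ x, G.coverWeight (q ++ [x]) D ≤ G.f y x := by
    intro x
    have hyx : [y, x] <:+: q ++ [x] := ⟨q.dropLast, [], by rw [← hq']; simp⟩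
    calc G.coverWeight (q ++ [x]) D ≤ G.coverWeight [y, x] D := G.cw_mono hyx hnn
      _ = G.f y x := G.cw_pair hD y x
  have hsum : ∑ x ∈ Finset.univ.erase z, G.coverWeight (q ++ [x]) D
      ≤ ∑ x ∈ Finset.univ.erase z, G.f y x :=
    Finset.sum_le_sum fun x _ => hbound x
  linarith

lemma le_cover {D : List (List V × ℚ)} (hD : G.IsFlowDecomposition D) :
    ∀ (l : List V) (a b : V), (a :: b :: l).Chain' G.E →
      excessOf G.f (a :: b :: l) ≤ G.coverWeight (a :: b :: l) D := by
  intro l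
  induction l using List.reverseRecOn with
  | nil =>
    intro a b _
    have h1 : excessOf G.f [a, b] = G.f a b := by simp [excessOf]
    rw [h1, G.cw_pair hD a b]
  | append_singleton l z ih =>
    intro a b hc
    have hc' : ((a :: b :: l) ++ [z]).Chain' G.E := by simpa using hc
    simp only [List.Chain'] at hc'; rw [List.isChain_append] at hc'
    obtain ⟨hc1, -, hlink⟩ := hc'
    have hqne : (b :: l) ≠ [] := by simp
    have hy : (a :: b :: l).getLast? = some ((b :: l).getLast hqne) := by
      rw [List.getLast?_eq_getLast (l := a :: b :: l) (by simp), List.getLast_cons hqne]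
    set y := (b :: l).getLast hqne with hy_def
    have hEyz : G.E y z := hlink y hy z (by simp)
    have hgetD : (b :: l).getD l.length b = y := by
      rw [hy_def, List.getLast_eq_getElem, List.getD_eq_getElem _ _ (by simp)]
      simp
    have hexc : excessOf G.f (a :: b :: (l ++ [z]))
        = excessOf G.f (a :: b :: l) - ∑ x ∈ Finset.univ.erase z, G.f y x := by
      rw [excessOf_eq G.f a b (l ++ [z]) b, excessOf_eq G.f a b l b]
      have hlen2 : (l ++ [z]).length = l.length + 1 := by simp
      rw [hlen2, Finset.sum_range_succ]
      have hcons : (b :: (l ++ [z])) = (b :: l) ++ [z] := by simp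
      have hcap_same : ∀ m ∈ Finset.range l.length,
          capg G.f (b :: (l ++ [z])) b m = capg G.f (b :: l) b m := by
        intro m hm
        simp only [Finset.mem_range] at hm
        unfold capg
        rw [hcons, List.getD_append _ _ _ _ (by simp; omega),
          List.getD_append _ _ _ _ (by simp; omega)]
      rw [Finset.sum_congr rfl hcap_same]
      have elast1 : (b :: (l ++ [z])).getD l.length b = y := by
        rw [hcons, List.getD_append _ _ _ _ (by simp), hgetD]
      have elast2 : (b :: (l ++ [z])).getD (l.length + 1) b = z := by
        rw [hcons, List.getD_append_right _ _ _ _ (by simp)]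
        simp
      unfold capg
      rw [elast1, elast2]
      ring
    have hstep := G.cw_step hD hy hEyz
    have hih := ih a b hc1
    have hfin : a :: b :: (l ++ [z]) = (a :: b :: l) ++ [z] := by simp
    rw [hfin] at hexc ⊢
    rw [hexc]
    linarith

lemma key_lemma : ∀ (N : ℕ) (g : V → V → ℚ), (supp g).card ≤ N → G.Resid g →
    ∀ (a b : V) (l : List V), (a :: b :: l).Chain' G.E →
    ∃ D : List (List V × ℚ), (∀ Pw ∈ D, G.IsSourceSinkPath Pw.1 ∧ 0 < Pw.2) ∧
      (∀ u v, G.coverWeight [u, v] D = g u v) ∧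
      G.coverWeight (a :: b :: l) D ≤ max (excessOf g (a :: b :: l)) 0 := by
  intro N
  induction N with
  | zero =>
    intro g hcard hg a b l _
    refine ⟨[], by simp, ?_, ?_⟩
    · intro u v
      rw [cw_nil]
      symm
      by_contra hne
      have hpos : 0 < g u v := lt_of_le_of_ne (hg.1 u v) (Ne.symm hne)
      have : (u, v) ∈ supp g := by
        simp only [supp, Finset.mem_filter, Finset.mem_univ, true_and]; exact hpos
      have := Finset.card_pos.mpr ⟨(u, v), this⟩
      omega
    · rw [cw_nil]; exact le_max_right _ _
  | succ N ih =>
    intro g hcard hg a b l hpc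
    by_cases h0 : ∀ c d, [c, d] <:+: (a :: b :: l) → 0 < g c d
    · -- all edges of p positive in g
      have hchpos : (a :: b :: l).Chain' (posr g) := chain'_of_pair_infix h0
      set q : List V := b :: l with hq_def
      set S := (Finset.range l.length).filter (fun m => 0 < capg g q b m) with hS_def
      by_cases hS : S.Nonempty
      · -- Case 3 : escape
        set j' := S.max' hS with hj'_def
        have hj'S : j' ∈ S := S.max'_mem hS
        have hj'lt : j' < l.length := Finset.mem_range.mp (Finset.mem_filter.mp hj'S).1
        have hj'cap : 0 < capg g q b j' := (Finset.mem_filter.mp hj'S).2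
        have hj'max : ∀ m, m ∈ Finset.range l.length → j' < m → capg g q b m ≤ 0 := by
          intro m hm hlt
          by_contra hcon
          push_neg at hcon
          have : m ∈ S := Finset.mem_filter.mpr ⟨hm, hcon⟩
          have := S.le_max' m this
          omega
        set uj := q.getD j' b with huj_def
        set unext := q.getD (j' + 1) b with hunext_def
        obtain ⟨x, hx1, hx2⟩ : ∃ x ∈ Finset.univ.erase unext, 0 < g uj x := by
          by_contra hcon
          push_neg at hcon
          have : capg g q b j' ≤ 0 := Finset.sum_nonpos fun x hx => hcon x hx
          linarith
        have hxne : x ≠ unext := (Finset.mem_erase.mp hx1).1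
        -- the prefix path
        set pT : List V := a :: q.take (j' + 1) with hpT_def
        have hqlen : q.length = l.length + 1 := by simp [hq_def]
        have htake_len : (q.take (j' + 1)).length = j' + 1 := by
          rw [List.length_take]; omega
        have htake_last : (q.take (j' + 1)).getLast? = some uj := by
          rw [List.getLast?_eq_getElem?, htake_len]
          simp only [Nat.add_sub_cancel]
          rw [List.getElem?_take_of_lt (by omega), List.getElem?_eq_getElem (by omega)]
          rw [huj_def, List.getD_eq_getElem _ _ (by omega)]
        have hpT_last : pT.getLast? = some uj := by
          rw [hpT_def, List.getLast?_cons, htake_last]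
          simp
        have hpT_inf_pairs : ∀ m, m < j' →
            [q.getD m b, q.getD (m + 1) b] <:+: pT := by
          intro m hm
          have h1 : pT[m + 1]? = some (q.getD m b) := by
            rw [hpT_def, List.getElem?_cons_succ,
              List.getElem?_take_of_lt (show m < j' + 1 by omega),
              List.getElem?_eq_getElem (show m < q.length by omega),
              List.getD_eq_getElem _ _ (show m < q.length by omega)]
          have h2 : pT[m + 1 + 1]? = some (q.getD (m + 1) b) := by
            rw [hpT_def, List.getElem?_cons_succ,
              List.getElem?_take_of_lt (show m + 1 < j' + 1 by omega),
              List.getElem?_eq_getElem (show m + 1 < q.length by omega),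
              List.getD_eq_getElem _ _ (show m + 1 < q.length by omega)]
          exact consec_pair_infix' h1 h2
        -- source and sink extensions
        obtain ⟨B, hB1, hB2, hB3⟩ := G.toSource hg
          (Finset.univ.filter fun w => Relation.TransGen G.E w a).card a le_rfl
          ⟨b, h0 a b ⟨[], l, rfl⟩⟩
        obtain ⟨F, hF1, hF2, hF3⟩ := G.toSink hg
          (Finset.univ.filter fun w => Relation.TransGen G.E x w).card x le_rfl
          ⟨uj, hx2⟩
        have hBne : B ≠ [] := by rintro rfl; simp at hB2
        have hFne : F ≠ [] := by rintro rfl; simp at hF2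
        obtain ⟨F', hF'⟩ : ∃ F', F = x :: F' := by
          cases F with
          | nil => exact absurd rfl hFne
          | cons f0 F'' =>
            simp only [List.head?_cons, Option.some_inj] at hF2
            exact ⟨F'', by rw [hF2]⟩
        have hBsplit : B.dropLast ++ [a] = B := eq_dropLast_append hB2
        set P : List V := B.dropLast ++ pT ++ F with hP_def
        have hPalt : P = B ++ (q.take (j' + 1) ++ F) := by
          rw [hP_def, ← hBsplit, hpT_def]
          simp [List.append_assoc]
        have htake_ne : q.take (j' + 1) ≠ [] := by
          intro hcon
          have := htake_len
          rw [hcon] at this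
          simp at this
        have htake_head : (q.take (j' + 1)).head? = some b := by
          rw [hq_def]
          rfl
        have hch : P.Chain' (posr g) := by
          rw [hPalt]; simp only [List.Chain']; rw [List.isChain_append]
          refine ⟨hB1, ?_, ?_⟩
          · rw [List.isChain_append]
            refine ⟨?_, hF1, ?_⟩
            · have hqchain : q.Chain' (posr g) := hchpos.tail
              have := (List.take_append_drop (j' + 1) q) ▸ hqchain
              exact (List.isChain_append.mp this).1
            · intro y hy z hz
              rw [htake_last] at hy
              rw [hF2] at hz
              simp only [Option.mem_some_iff] at hy hz
              subst hy; subst hz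
              exact hx2
          · intro y hy z hz
            rw [hB2] at hy
            rw [List.head?_append_of_ne_nil _ htake_ne, htake_head] at hz
            simp only [Option.mem_some_iff] at hy hz
            subst hy; subst hz
            exact h0 a b ⟨[], l, rfl⟩
        have hlenP : 2 ≤ P.length := by
          rw [hP_def]
          simp only [List.length_append, hpT_def, List.length_cons, htake_len]
          omega
        have hpTne : pT ≠ [] := by rw [hpT_def]; simp
        have hsrcP : ∀ s ∈ P.head?, G.IsSource s := by
          rw [hPalt, List.head?_append_of_ne_nil _ hBne]
          exact hB3
        have hsnkP : ∀ t ∈ P.getLast?, G.IsSink t := by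
          rw [hP_def, List.getLast?_append_of_ne_nil _ hFne]
          exact hF3
        obtain ⟨w0, g', hw0, hres', hcd', heq', hssp'⟩ := G.extract hg hch hlenP hsrcP hsnkP
        have hnd : P.Nodup := G.nodup_of_chainE hssp'.1.2
        have hpT_infP : pT <:+: P := ⟨B.dropLast, F, by rw [hP_def]⟩
        have hQinf : pT ++ [x] <:+: P := by
          refine ⟨B.dropLast, F', ?_⟩
          rw [hP_def, hF']
          simp [List.append_assoc]
        have hujx_inf : [uj, x] <:+: P := by
          have h1 : pT.dropLast ++ [uj] = pT := eq_dropLast_append hpT_last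
          have h2 : [uj, x] <:+: pT ++ [x] := ⟨pT.dropLast, [], by rw [← h1]; simp⟩
          exact h2.trans hQinf
        have hab_infP : [a, b] <:+: P := by
          have h1 : [a, b] <:+: pT := ⟨[], l.take j', by rw [hpT_def, hq_def]; rfl⟩
          exact h1.trans hpT_infP
        -- characterization of escape pairs on P
        have hchar : ∀ m, m < l.length → ∀ x', x' ≠ q.getD (m + 1) b →
            ([q.getD m b, x'] <:+: P ↔ (m = j' ∧ x' = x)) := by
          intro m hm x' hne
          constructor
          · intro hinf
            rcases lt_trichotomy m j' with hlt | heq | hgt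
            · exfalso
              have hpair := (hpT_inf_pairs m hlt).trans hpT_infP
              have := pair_infix_succ_unique hnd (q := [q.getD m b])
                (y := q.getD m b) (by simp) hinf hpair
              exact hne this
            · have hinf' : [q.getD m b, x] <:+: P := by rw [heq]; exact hujx_inf
              have := pair_infix_succ_unique hnd (q := [q.getD m b])
                (y := q.getD m b) (by simp) hinf hinf'
              exact ⟨heq, this⟩
            · exfalso
              have hcap0 := hj'max m (Finset.mem_range.mpr hm) hgt
              have hterm : g (q.getD m b) x' ≤ capg g q b m := by
                refine Finset.single_le_sum (fun y _ => hg.1 _ y) ?_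
                exact Finset.mem_erase.mpr ⟨hne, Finset.mem_univ x'⟩
              have hzero : g (q.getD m b) x' = 0 :=
                le_antisymm (by linarith) (hg.1 _ _)
              have hposP : 0 < g (q.getD m b) x' := rel_of_pair_infix hch hinf
              linarith
          · rintro ⟨rfl, rfl⟩
            exact hujx_inf
        -- p is not an infix of P
        have hpnotinf : ¬ (a :: b :: l) <:+: P := by
          intro hinf
          obtain ⟨s, t, hst⟩ := hinf
          have h1 : P = s ++ a :: (q ++ t) := by
            rw [← hst, hq_def]; simp
          have h2 : P = B.dropLast ++ a :: (q.take (j' + 1) ++ F) := by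
            rw [hP_def, hpT_def]; simp
          obtain ⟨hs_eq, ht_eq⟩ := occ_unique s hnd h1 h2
          have hidx : (q ++ t)[j' + 1]? = (q.take (j' + 1) ++ F)[j' + 1]? := by
            rw [ht_eq]
          rw [List.getElem?_append_left (by omega), List.getElem?_append_right (by omega),
            htake_len] at hidx
          simp only [Nat.sub_self] at hidx
          rw [hF'] at hidx
          simp only [List.getElem?_cons_zero] at hidx
          rw [List.getElem?_eq_getElem (by omega)] at hidx
          have : q[j' + 1]'(by omega) = x := by
            exact Option.some_inj.mp hidx
          rw [← List.getD_eq_getElem _ b (by omega)] at this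
          exact hxne (hunext_def ▸ this.symm ▸ rfl)
        -- g' values
        have hg'val : ∀ u v, g' u v = g u v - (if [u, v] <:+: P then w0 else 0) := by
          intro u v
          have := heq' u v
          linarith
        -- cap computation
        have hcap' : ∀ m ∈ Finset.range l.length,
            capg g' q b m = capg g q b m - (if m = j' then w0 else 0) := by
          intro m hm
          have hm' : m < l.length := Finset.mem_range.mp hm
          unfold capg
          have hterms : ∀ x' ∈ Finset.univ.erase (q.getD (m + 1) b),
              g' (q.getD m b) x'
                = g (q.getD m b) x' - (if m = j' ∧ x' = x then w0 else 0) := by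
            intro x' hx'
            have hne' : x' ≠ q.getD (m + 1) b := (Finset.mem_erase.mp hx').1
            rw [hg'val]
            congr 1
            by_cases hc : [q.getD m b, x'] <:+: P
            · rw [if_pos hc, if_pos ((hchar m hm' x' hne').mp hc)]
            · rw [if_neg hc, if_neg fun hcc => hc ((hchar m hm' x' hne').mpr hcc)]
          rw [Finset.sum_congr rfl hterms, Finset.sum_sub_distrib]
          congr 1
          by_cases hmj : m = j'
          · rw [if_pos hmj]
            simp only [hmj, eq_self_iff_true, true_and]
            rw [Finset.sum_ite_eq' (Finset.univ.erase (q.getD (j' + 1) b)) x fun _ => w0]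
            exact if_pos hx1
          · rw [if_neg hmj, Finset.sum_eq_zero]
            intro x' _
            rw [if_neg]
            rintro ⟨hcc, -⟩
            exact hmj hcc
        -- excess preservation
        have hexc_eq : excessOf g' (a :: b :: l) = excessOf g (a :: b :: l) := by
          rw [excessOf_eq g' a b l b, excessOf_eq g a b l b]
          rw [Finset.sum_congr rfl hcap', Finset.sum_sub_distrib]
          rw [Finset.sum_ite_eq' (Finset.range l.length) j' fun _ => w0]
          rw [if_pos (Finset.mem_range.mpr hj'lt)]
          have hab : g' a b = g a b - w0 := by
            rw [hg'val, if_pos hab_infP]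
          rw [hab]
          ring
        obtain ⟨D', hD1', hD2', hD3'⟩ := ih g' (by omega) hres' a b l hpc
        refine ⟨(P, w0) :: D', ?_, ?_, ?_⟩
        · intro Pw hPw
          rcases List.mem_cons.mp hPw with h | h
          · rw [h]; exact ⟨hssp', hw0⟩
          · exact hD1' Pw h
        · intro u v
          rw [cw_cons, hD2' u v]
          exact (heq' u v).symm
        · rw [cw_cons, if_neg hpnotinf, ← hexc_eq]
          linarith [hD3']
      · -- Case 2 : no escape capacity, excess = g a b
        have hcaps : ∑ m ∈ Finset.range l.length, capg g (b :: l) b m ≤ 0 := by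
          apply Finset.sum_nonpos
          intro m hm
          by_contra hcon
          push_neg at hcon
          exact hS ⟨m, Finset.mem_filter.mpr ⟨hm, hcon⟩⟩
        have hexc : g a b ≤ excessOf g (a :: b :: l) := by
          rw [excessOf_eq g a b l b]
          linarith
        obtain ⟨D, hD1, hD2⟩ := G.exists_decomp hg
        refine ⟨D, hD1, hD2, ?_⟩
        have hmono : G.coverWeight (a :: b :: l) D ≤ G.coverWeight [a, b] D :=
          G.cw_mono ⟨[], l, rfl⟩ fun Pw h => le_of_lt (hD1 Pw h).2
        rw [hD2 a b] at hmono
        exact le_trans (le_trans hmono hexc) (le_max_left _ _)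
    · -- Case 1 : some edge of p has zero flow
      push_neg at h0
      obtain ⟨c, d, hcd, hle⟩ := h0
      obtain ⟨D, hD1, hD2⟩ := G.exists_decomp hg
      refine ⟨D, hD1, hD2, ?_⟩
      have hmono : G.coverWeight (a :: b :: l) D ≤ G.coverWeight [c, d] D :=
        G.cw_mono hcd fun Pw h => le_of_lt (hD1 Pw h).2
      rw [hD2 c d] at hmono
      have : G.coverWeight (a :: b :: l) D ≤ 0 := le_trans hmono hle
      exact le_trans this (le_max_right _ _)

end FlowGraph


open FlowGraph in
/-- in a flow graph, a path `P` is `w`-safe with `w > 0` if and only if its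
excess flow satisfies `f_P ≥ w > 0`. -/
theorem stmt_2 {V : Type} [Fintype V] [DecidableEq V] (G : FlowGraph V)
    (p : List V) (hp : G.IsPath p) (w : ℚ) (hw : 0 < w) :
    G.IsWSafe p w ↔ w ≤ G.excess p := by
  obtain ⟨hp2, hpc⟩ := hp
  rcases p with _ | ⟨a, p'⟩
  · simp at hp2
  rcases p' with _ | ⟨b, l⟩
  · simp at hp2
  constructor
  · intro hsafe
    by_contra hlt
    push_neg at hlt
    obtain ⟨D, hD1, hD2, hD3⟩ :=
      G.key_lemma (supp G.f).card G.f le_rfl G.resid_self a b l hpc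
    have hD : G.IsFlowDecomposition D := ⟨hD1, fun u v _ => hD2 u v⟩
    have h1 := hsafe D hD
    rw [excessOf_f] at hD3
    have h2 : max (G.excess (a :: b :: l)) 0 < w := max_lt hlt hw
    linarith
  · intro hle D hD
    have h1 := G.le_cover hD l a b hpc
    rw [excessOf_f] at h1
    linarith
end

section
/- In a flow graph, for every path P and every subpath P' of P (contiguous, with at least one edge), the excess flows satisfy f_{P'} ≥ f_P. In particular this holds for every prefix and every suffix of P containing at least one edge. -/
namespace FlowGraph

variable {V : Type} [Fintype V] [DecidableEq V] (G : FlowGraph V)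

lemma f_nonneg (u v : V) : 0 ≤ G.f u v := by
  by_cases h : G.E u v
  · exact (G.f_pos u v h).le
  · rw [G.f_eq_zero u v h]

/-- Penalty sum along consecutive pairs. -/
def S : List V → ℚ
  | a :: b :: t => (∑ x ∈ Finset.univ.erase b, G.f a x) + S (b :: t)
  | _ => 0

lemma S_nonneg : ∀ l : List V, 0 ≤ G.S l
  | [] => le_refl 0
  | [_] => le_refl 0
  | a :: b :: t => by
      have h1 : 0 ≤ ∑ x ∈ Finset.univ.erase b, G.f a x :=
        Finset.sum_nonneg fun x _ => G.f_nonneg a x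
      have h2 := S_nonneg (b :: t)
      simp only [S]
      linarith

lemma excess_eq (u v : V) (rest : List V) :
    G.excess (u :: v :: rest) = G.f u v - G.S (v :: rest) := by
  have key : ∀ (rest : List V) (v : V),
      (((v :: rest).zip rest).map
        (fun ab => ∑ x ∈ Finset.univ.erase ab.2, G.f ab.1 x)).sum = G.S (v :: rest) := by
    intro rest
    induction rest with
    | nil => intro v; simp [S]
    | cons w t ih => intro v; simp only [List.zip_cons_cons, List.map_cons, List.sum_cons, ih w, S]
  simp only [excess, key]

lemma S_mono : ∀ (l r : List V), G.S l ≤ G.S (l ++ r)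
  | [], r => by simpa [S] using G.S_nonneg r
  | [a], r => by
      cases r with
      | nil => simp
      | cons b t => simpa [S] using G.S_nonneg (a :: b :: t)
  | a :: b :: t, r => by
      have := S_mono (b :: t) r
      simp only [S, List.cons_append, List.append_eq]
      simp only [List.cons_append] at this
      linarith

/-- Prepending one vertex cannot increase the excess. -/
lemma excess_cons (a u v : V) (rest : List V)
    (hau : G.E a u) (huv : G.E u v) :
    G.excess (a :: u :: v :: rest) ≤ G.excess (u :: v :: rest) := by
  rw [G.excess_eq, G.excess_eq]
  have hS : G.S (u :: v :: rest) = (∑ x ∈ Finset.univ.erase v, G.f u x) + G.S (v :: rest) := rfl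
  rw [hS]
  have hcons := G.conservation u ⟨a, hau⟩ ⟨v, huv⟩
  have hsum : (∑ x ∈ Finset.univ.erase v, G.f u x) + G.f u v = ∑ x, G.f u x := by
    rw [add_comm]
    exact Finset.add_sum_erase Finset.univ (G.f u) (Finset.mem_univ v)
  have hle : G.f a u ≤ ∑ x, G.f x u :=
    Finset.single_le_sum (fun x _ => G.f_nonneg x u) (Finset.mem_univ a)
  linarith

lemma excess_append_left : ∀ (l p : List V), 2 ≤ p.length → (l ++ p).Chain' G.E →
    G.excess (l ++ p) ≤ G.excess p
  | [], p, _, _ => le_refl _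
  | a :: l, p, hp, hc => by
      have hc' : (l ++ p).Chain' G.E := hc.tail
      have ih := excess_append_left l p hp hc'
      refine le_trans ?_ ih
      match hlp : l ++ p with
      | [] =>
          exfalso
          have hpnil : p = [] := (List.append_eq_nil_iff.mp hlp).2
          rw [hpnil] at hp; simp at hp
      | [u] =>
          exfalso
          have : 2 ≤ (l ++ p).length := le_trans hp (by simp)
          rw [hlp] at this; simp at this
      | u :: v :: t =>
          have hc2 : (a :: u :: v :: t).Chain' G.E := by rwa [← hlp, ← List.cons_append]
          have hau : G.E a u := hc2.rel_head
          have huv : G.E u v := hc2.tail.rel_head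
          have : G.excess (a :: u :: v :: t) ≤ G.excess (u :: v :: t) :=
            G.excess_cons a u v t hau huv
          simpa [hlp] using this

end FlowGraph

open FlowGraph in
/-- for every path `P` and every subpath `P'` of `P` (contiguous, with at
least one edge), the excess flows satisfy `f_{P'} ≥ f_P` (in particular for every prefix
and suffix of `P` with at least one edge, these being infixes). -/
theorem stmt_5 {V : Type} [Fintype V] [DecidableEq V] (G : FlowGraph V)
    (p q : List V) (hq : G.IsPath q) (hpq : p <:+: q) (hp : 2 ≤ p.length) :
    G.excess q ≤ G.excess p := by
  obtain ⟨l, r, rfl⟩ := hpq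
  obtain ⟨u, v, rest, rfl⟩ : ∃ u v rest, p = u :: v :: rest := by
    match p, hp with
    | u :: v :: rest, _ => exact ⟨u, v, rest, rfl⟩
  have step1 : G.excess (l ++ (u :: v :: rest) ++ r) ≤ G.excess (u :: v :: (rest ++ r)) := by
    have hchain : (l ++ (u :: v :: (rest ++ r))).Chain' G.E := by
      have := hq.2
      simpa [List.append_assoc] using this
    have := G.excess_append_left l (u :: v :: (rest ++ r)) (by simp) hchain
    simpa [List.append_assoc] using this
  refine le_trans step1 ?_
  rw [G.excess_eq, G.excess_eq]
  have := G.S_mono (v :: rest) r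
  simp only [List.cons_append] at this ⊢
  linarith
end

section
/- In a flow graph, for every vertex v, the vertices of the funnel F_v having a unique sink path form a converging in-tree rooted at v: every vertex x ≠ v of F_v that has a unique sink path in F_v has exactly one outgoing edge in F_v, and the head of that edge also has a unique sink path in F_v. Consequently, once any path of F_v reaches a vertex with a unique sink path, all of its subsequent vertices have unique sink paths. -/
namespace FlowGraph

variable {V : Type} [Fintype V] [DecidableEq V] (G : FlowGraph V)

/-- A left-maximal safe path ending at `v`: a safe path whose last vertex is `v`
and which cannot be prepended by an edge of `G` while remaining safe. -/
def IsLeftMaxSafeTo (v : V) (p : List V) : Prop :=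
  G.IsSafe p ∧ p.getLast? = some v ∧
  ∀ u x, p.head? = some x → G.E u x → ¬ G.IsSafe (u :: p)

/-- `x` is a vertex of the funnel `F_v` : it lies on some left-maximal safe path
ending at `v`. -/
def FunnelVertex (v x : V) : Prop :=
  ∃ p, G.IsLeftMaxSafeTo v p ∧ x ∈ p

/-- `(x,y)` is an edge of the funnel `F_v`. -/
def FunnelEdge (v x y : V) : Prop :=
  ∃ p, G.IsLeftMaxSafeTo v p ∧ [x, y] <:+: p

/-- A (possibly single-vertex) path inside the funnel `F_v`. -/
def FunnelPath (v : V) (p : List V) : Prop :=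
  p ≠ [] ∧ (∀ x ∈ p, G.FunnelVertex v x) ∧ p.Chain' (G.FunnelEdge v)

/-- A source of the funnel `F_v`: a funnel vertex with no incoming funnel edge. -/
def FunnelSource (v s : V) : Prop :=
  G.FunnelVertex v s ∧ ∀ y, ¬ G.FunnelEdge v y s

/-- A source path of `x` within `F_v`: a path in `F_v` from a source of `F_v` to `x`. -/
def FunnelSourcePath (v x : V) (p : List V) : Prop :=
  G.FunnelPath v p ∧ (∀ s ∈ p.head?, G.FunnelSource v s) ∧ p.getLast? = some x

/-- A sink path of `x` within `F_v`: a path in `F_v` from `x` to `v`. -/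
def FunnelSinkPath (v x : V) (p : List V) : Prop :=
  G.FunnelPath v p ∧ p.head? = some x ∧ p.getLast? = some v

end FlowGraph

namespace FlowGraph

variable {V : Type} [Fintype V] [DecidableEq V] (G : FlowGraph V) (v : V)

private lemma infix_pairs_chain : ∀ (l : List V) {m : List V}, l <:+: m →
    l.Chain' (fun a b => [a, b] <:+: m)
  | [], _, _ => List.isChain_nil
  | [_], _, _ => List.isChain_singleton _
  | a :: b :: r, m, h => by
      refine List.isChain_cons_cons.2 ⟨?_, infix_pairs_chain (b :: r) ?_⟩
      · exact List.IsInfix.trans ⟨[], r, by simp⟩ h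
      · exact List.IsInfix.trans ⟨[a], [], by simp⟩ h

/-- In `F_v`, the suffix of a left-maximal safe path starting at `x` is a sink path of `x`. -/
lemma sinkPath_of_split {p s t : List V} {x : V}
    (hp : G.IsLeftMaxSafeTo v p) (h : p = s ++ x :: t) :
    G.FunnelSinkPath v x (x :: t) := by
  refine ⟨⟨List.cons_ne_nil _ _, ?_, ?_⟩, rfl, ?_⟩
  · intro a ha
    exact ⟨p, hp, by rw [h]; exact List.mem_append_right _ ha⟩
  · have hinf : (x :: t) <:+: p := ⟨s, [], by simp [h]⟩
    exact List.IsChain.imp (fun a b hab => ⟨p, hp, hab⟩) (infix_pairs_chain (x :: t) hinf)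
  · have hl := hp.2.1
    rw [h] at hl
    rwa [List.getLast?_append_cons] at hl

/-- Prepending a funnel edge to a sink path gives a sink path. -/
lemma sinkPath_cons {x y : V} {q : List V} (he : G.FunnelEdge v x y)
    (hq : G.FunnelSinkPath v y q) : G.FunnelSinkPath v x (x :: q) := by
  obtain ⟨⟨hne, hvert, hchain⟩, hhead, hlast⟩ := hq
  have hx : G.FunnelVertex v x := by
    obtain ⟨p, hp, s, t, hst⟩ := he
    exact ⟨p, hp, by rw [← hst]; simp⟩
  cases q with
  | nil => simp at hhead
  | cons a q' =>
    have hay : a = y := by simpa using hhead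
    subst hay
    refine ⟨⟨List.cons_ne_nil _ _, ?_, List.isChain_cons_cons.2 ⟨he, hchain⟩⟩, rfl, ?_⟩
    · intro b hb
      rcases List.mem_cons.1 hb with h | h
      · subst h; exact hx
      · exact hvert b h
    · simpa using hlast

/-- If `x` has a unique sink path and `(x,z)` is a funnel edge, then `z` has a
unique sink path. -/
lemma step_unique {x z : V} (hu : ∃! p : List V, G.FunnelSinkPath v x p)
    (he : G.FunnelEdge v x z) : ∃! p : List V, G.FunnelSinkPath v z p := by
  obtain ⟨p₀, hp₀, huniq⟩ := hu
  obtain ⟨p, hp, s, t, hst⟩ := he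
  have hq : G.FunnelSinkPath v z (z :: t) :=
    G.sinkPath_of_split v (s := s ++ [x]) (t := t) hp (by rw [← hst]; simp)
  have hxq := G.sinkPath_cons v ⟨p, hp, s, t, hst⟩ hq
  refine ⟨z :: t, hq, fun q' hq' => ?_⟩
  have h1 := huniq _ (G.sinkPath_cons v ⟨p, hp, s, t, hst⟩ hq')
  have h2 := huniq _ hxq
  have h3 : x :: q' = x :: z :: t := h1.trans h2.symm
  injection h3

end FlowGraph

open FlowGraph in
/-- the vertices of `F_v` with a unique sink path form a converging in-tree
rooted at `v`: every such vertex `x ≠ v` has exactly one outgoing funnel edge, whose head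
also has a unique sink path; consequently once a funnel path reaches a vertex with a
unique sink path, all subsequent vertices have unique sink paths. -/
theorem stmt_11 {V : Type} [Fintype V] [DecidableEq V] (G : FlowGraph V) (v : V) :
    (∀ x : V, G.FunnelVertex v x → x ≠ v → (∃! p : List V, G.FunnelSinkPath v x p) →
      (∃! y : V, G.FunnelEdge v x y) ∧
      (∀ y : V, G.FunnelEdge v x y → ∃! p : List V, G.FunnelSinkPath v y p)) ∧
    (∀ (q₁ q₂ : List V) (x : V), G.FunnelPath v (q₁ ++ x :: q₂) →
      (∃! p : List V, G.FunnelSinkPath v x p) →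
      ∀ y ∈ q₂, ∃! p : List V, G.FunnelSinkPath v y p) := by
  constructor
  · intro x hx hxv hu
    refine ⟨?_, fun y hy => G.step_unique v hu hy⟩
    obtain ⟨p₀, hp₀, huniq⟩ := hu
    cases p₀ with
    | nil => simpa using hp₀.2.1
    | cons a rest =>
      have hax : a = x := by simpa using hp₀.2.1
      subst hax
      cases rest with
      | nil =>
        have : a = v := by simpa using hp₀.2.2
        exact absurd this hxv
      | cons y t =>
        have hxy : G.FunnelEdge v a y := (List.isChain_cons_cons.1 hp₀.1.2.2).1
        refine ⟨y, hxy, fun w hw => ?_⟩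
        obtain ⟨p, hp, s, t', hst⟩ := hw
        have hq : G.FunnelSinkPath v w (w :: t') :=
          G.sinkPath_of_split v (s := s ++ [a]) (t := t') hp (by rw [← hst]; simp)
        have h1 : a :: w :: t' = a :: y :: t :=
          huniq _ (G.sinkPath_cons v ⟨p, hp, s, t', hst⟩ hq)
        have h2 : w :: t' = y :: t := by injection h1
        injection h2
  · intro q₁ q₂
    induction q₂ generalizing q₁ with
    | nil => intro x _ _ y hy; simp at hy
    | cons z rest ih =>
      intro x hpath hu y hy
      have hedge : G.FunnelEdge v x z := by
        have hc : ([x, z] : List V).Chain' (G.FunnelEdge v) :=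
          hpath.2.2.infix ⟨q₁, rest, by simp⟩
        exact (List.isChain_cons_cons.1 hc).1
      have huz := G.step_unique v hu hedge
      rcases List.mem_cons.1 hy with h | h
      · subst h; exact huz
      · refine ih (q₁ ++ [x]) z ?_ huz y h
        have := hpath
        rwa [show q₁ ++ x :: z :: rest = (q₁ ++ [x]) ++ z :: rest by simp] at this
end
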